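/- If a rectangular box B₁ with edge lengths a₁, b₁, c₁ is contained (after any rigid motion) in a rectangular box B₂ with edge lengths a₂, b₂, c₂, then a₁ + b₁ + c₁ ≤ a₂ + b₂ + c₂. -/

import Mathlib

open MeasureTheory Set Metric Function

/-- The rectangular box `[0,a] × [0,b] × [0,c]` in Euclidean 3-space. -/
def rectBox (a b c : ℝ) : Set (EuclideanSpace ℝ (Fin 3)) :=
  {x | x 0 ∈ Set.Icc 0 a ∧ x 1 ∈ Set.Icc 0 b ∧ x 2 ∈ Set.Icc 0 c}

local notation "E3" => EuclideanSpace ℝ (Fin 3)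

private lemma contMax (i : Fin 3) : Continuous fun x : E3 => max (x i) 0 :=
  (EuclideanSpace.proj i).continuous.max continuous_const

private lemma intMax (i : Fin 3) :
    IntegrableOn (fun x : E3 => max (x i) 0) (closedBall 0 1) :=
  (contMax i).continuousOn.integrableOn_compact (isCompact_closedBall 0 1)

/-- Change of variables under a linear isometry of `E3`, over the unit ball. -/
private lemma cov (L : E3 ≃ₗᵢ[ℝ] E3) (F : E3 → ℝ) :
    ∫ x in closedBall 0 1, F (L x) = ∫ x in closedBall 0 1, F x := by
  have h1 : L ⁻¹' (closedBall 0 1) = closedBall 0 1 := by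
    ext x; simp [mem_closedBall, dist_zero_right, L.norm_map]
  nth_rewrite 1 [← h1]
  exact L.measurePreserving.setIntegral_preimage_emb L.toHomeomorph.measurableEmbedding F _

/-- All three coordinate integrals coincide. -/
private lemma coordEq (i : Fin 3) :
    ∫ x in closedBall (0 : E3) 1, max (x i) 0 = ∫ x in closedBall (0 : E3) 1, max (x 0) 0 := by
  have := cov (LinearIsometryEquiv.piLpCongrLeft 2 ℝ ℝ (Equiv.swap i 0))
    (fun x : E3 => max (x 0) 0)
  rw [← this]
  congr 1
  ext x
  congr 1
  simp [LinearIsometryEquiv.piLpCongrLeft_apply, Equiv.piCongrLeft'_apply]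

private lemma coordPos : 0 < ∫ x in closedBall (0 : E3) 1, max (x 0) 0 := by
  rw [setIntegral_pos_iff_support_of_nonneg_ae ?_ (intMax 0)]
  · have hU : IsOpen ({x : E3 | 0 < x 0} ∩ ball 0 1) :=
      (isOpen_lt continuous_const (EuclideanSpace.proj (0 : Fin 3)).continuous).inter isOpen_ball
    have hsub : ({x : E3 | 0 < x 0} ∩ ball 0 1) ⊆
        support (fun x : E3 => max (x 0) 0) ∩ closedBall 0 1 := by
      rintro x ⟨hx0, hx1⟩
      refine ⟨?_, ball_subset_closedBall hx1⟩
      simp only [mem_support]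
      have : max (x 0) 0 = x 0 := max_eq_left hx0.le
      rw [this]
      exact hx0.ne'
    have hne : ({x : E3 | 0 < x 0} ∩ ball 0 1).Nonempty := by
      refine ⟨EuclideanSpace.single 0 (1/2 : ℝ), ?_, ?_⟩
      · simp [EuclideanSpace.single_apply]
      · rw [mem_ball, dist_zero_right, EuclideanSpace.norm_single]
        norm_num
    exact lt_of_lt_of_le (hU.measure_pos volume hne) (measure_mono hsub)
  · filter_upwards with x using le_max_right _ _

/-- Odd integrals over the ball vanish. -/
private lemma oddZero (v : E3) : ∫ x in closedBall (0 : E3) 1, (inner ℝ v x : ℝ) = 0 := by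
  have h1 : (Neg.neg : E3 → E3) ⁻¹' (closedBall 0 1) = closedBall 0 1 := by
    ext x; simp [mem_closedBall, dist_zero_right]
  have h2 : ∫ x in closedBall (0 : E3) 1, (inner ℝ v (-x) : ℝ)
      = ∫ x in closedBall (0 : E3) 1, (inner ℝ v x : ℝ) := by
    nth_rewrite 1 [← h1]
    exact (Measure.measurePreserving_neg _).setIntegral_preimage_emb
      (Homeomorph.neg E3).measurableEmbedding _ _
  simp only [inner_neg_right] at h2
  rw [integral_neg] at h2
  linarith

private lemma termBound {z e t : ℝ} (h0 : 0 ≤ z) (h1 : z ≤ e) : z * t ≤ e * max t 0 := by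
  rcases le_or_gt 0 t with ht | ht
  · rw [max_eq_left ht]; exact mul_le_mul_of_nonneg_right h1 ht
  · rw [max_eq_right ht.le, mul_zero]
    exact mul_nonpos_of_nonneg_of_nonpos h0 ht.le

/-- The support function of the box is bounded by the explicit formula. -/
private lemma upperBound {a b c : ℝ} (_ha : 0 ≤ a) (_hb : 0 ≤ b) (_hc : 0 ≤ c)
    {z : E3} (hz : z ∈ rectBox a b c) (x : E3) :
    (inner ℝ z x : ℝ) ≤ a * max (x 0) 0 + b * max (x 1) 0 + c * max (x 2) 0 := by
  obtain ⟨⟨h00, h01⟩, ⟨h10, h11⟩, ⟨h20, h21⟩⟩ := hz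
  rw [PiLp.inner_apply]
  simp only [RCLike.inner_apply', starRingEnd_apply, star_trivial]
  rw [Fin.sum_univ_three]
  gcongr ?_ + ?_ + ?_ <;> exact termBound ‹_› ‹_›

/-- The support function of the box is attained. -/
private lemma achieved {a b c : ℝ} (ha : 0 ≤ a) (hb : 0 ≤ b) (hc : 0 ≤ c) (u : E3) :
    ∃ y ∈ rectBox a b c,
      (inner ℝ y u : ℝ) = a * max (u 0) 0 + b * max (u 1) 0 + c * max (u 2) 0 := by
  classical
  refine ⟨(WithLp.equiv 2 (Fin 3 → ℝ)).symm
      (fun i => if 0 ≤ u i then ![a, b, c] i else 0), ?_, ?_⟩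
  · refine ⟨?_, ?_, ?_⟩ <;>
    · simp only [rectBox, WithLp.equiv_symm_apply, PiLp.toLp_apply, Set.mem_Icc]
      split_ifs <;> simp_all [Matrix.cons_val_zero, Matrix.cons_val_one]
  · rw [PiLp.inner_apply]
    simp only [RCLike.inner_apply', starRingEnd_apply, star_trivial,
      WithLp.equiv_symm_apply, PiLp.toLp_apply]
    rw [Fin.sum_univ_three]
    have : ∀ (e : ℝ) (t : ℝ), (if 0 ≤ t then e else 0) * t = e * max t 0 := by
      intro e t
      split_ifs with ht
      · rw [max_eq_left ht]
      · rw [max_eq_right (le_of_not_ge ht), mul_zero, zero_mul]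
    simp only [Matrix.cons_val_zero, Matrix.cons_val_one, Matrix.head_cons,
      Matrix.cons_val_two, Matrix.tail_cons]
    rw [this a, this b, this c]

theorem box_in_box_sum_edges (a₁ b₁ c₁ a₂ b₂ c₂ : ℝ)
    (ha₁ : 0 ≤ a₁) (hb₁ : 0 ≤ b₁) (hc₁ : 0 ≤ c₁)
    (ha₂ : 0 ≤ a₂) (hb₂ : 0 ≤ b₂) (hc₂ : 0 ≤ c₂)
    (f : EuclideanSpace ℝ (Fin 3) ≃ᵢ EuclideanSpace ℝ (Fin 3))
    (h : f '' rectBox a₁ b₁ c₁ ⊆ rectBox a₂ b₂ c₂) :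
    a₁ + b₁ + c₁ ≤ a₂ + b₂ + c₂ := by
  set L := f.toRealLinearIsometryEquiv with hL
  set v := f 0 with hv
  have hfx : ∀ y, f y = L y + v := by
    intro y
    have := f.toRealLinearIsometryEquiv_apply y
    rw [← hL, ← hv] at this
    rw [this, sub_add_cancel]
  -- pointwise support-function inequality
  have hpt : ∀ x : E3,
      (a₁ * max ((L.symm x) 0) 0 + b₁ * max ((L.symm x) 1) 0 + c₁ * max ((L.symm x) 2) 0)
        + (inner ℝ v x : ℝ)
      ≤ a₂ * max (x 0) 0 + b₂ * max (x 1) 0 + c₂ * max (x 2) 0 := by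
    intro x
    obtain ⟨y, hy, hyu⟩ := achieved ha₁ hb₁ hc₁ (L.symm x)
    have h2 : (inner ℝ (f y) x : ℝ)
        ≤ a₂ * max (x 0) 0 + b₂ * max (x 1) 0 + c₂ * max (x 2) 0 :=
      upperBound ha₂ hb₂ hc₂ (h ⟨y, hy, rfl⟩) x
    have h3 : (inner ℝ (f y) x : ℝ) = (inner ℝ y (L.symm x) : ℝ) + (inner ℝ v x : ℝ) := by
      rw [hfx y, inner_add_left]
      congr 1
      have h4 := L.inner_map_map y (L.symm x)
      rwa [L.apply_symm_apply] at h4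
    linarith
  set cb := closedBall (0 : E3) 1 with hcb
  have hintH : ∀ a b c : ℝ, IntegrableOn
      (fun x : E3 => a * max (x 0) 0 + b * max (x 1) 0 + c * max (x 2) 0) cb :=
    fun a b c => (((intMax 0).const_mul a).add ((intMax 1).const_mul b)).add
      ((intMax 2).const_mul c)
  have hcontH : ∀ a b c : ℝ, Continuous
      (fun x : E3 => a * max (x 0) 0 + b * max (x 1) 0 + c * max (x 2) 0) :=
    fun a b c => ((continuous_const.mul (contMax 0)).add
      (continuous_const.mul (contMax 1))).add (continuous_const.mul (contMax 2))
  have hcontL : Continuous (fun x : E3 =>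
      a₁ * max ((L.symm x) 0) 0 + b₁ * max ((L.symm x) 1) 0 + c₁ * max ((L.symm x) 2) 0) :=
    (hcontH a₁ b₁ c₁).comp L.symm.continuous
  have hinner : IntegrableOn (fun x : E3 => (inner ℝ v x : ℝ)) cb :=
    (continuous_const.inner continuous_id).continuousOn.integrableOn_compact
      (isCompact_closedBall 0 1)
  have hintL1 : IntegrableOn (fun x : E3 =>
      a₁ * max ((L.symm x) 0) 0 + b₁ * max ((L.symm x) 1) 0 + c₁ * max ((L.symm x) 2) 0) cb :=
    hcontL.continuousOn.integrableOn_compact (isCompact_closedBall 0 1)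
  have hintL : IntegrableOn (fun x : E3 =>
      (a₁ * max ((L.symm x) 0) 0 + b₁ * max ((L.symm x) 1) 0 + c₁ * max ((L.symm x) 2) 0)
        + (inner ℝ v x : ℝ)) cb := hintL1.add hinner
  -- integrate the pointwise inequality
  have hmono := setIntegral_mono hintL (hintH a₂ b₂ c₂) hpt
  have hsplit : ∫ x in cb, ((a₁ * max ((L.symm x) 0) 0 + b₁ * max ((L.symm x) 1) 0
        + c₁ * max ((L.symm x) 2) 0) + (inner ℝ v x : ℝ))
      = ∫ x in cb, (a₁ * max (x 0) 0 + b₁ * max (x 1) 0 + c₁ * max (x 2) 0) := by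
    have hcov : ∫ x in cb, (a₁ * max ((L.symm x) 0) 0 + b₁ * max ((L.symm x) 1) 0
          + c₁ * max ((L.symm x) 2) 0)
        = ∫ x in cb, (a₁ * max (x 0) 0 + b₁ * max (x 1) 0 + c₁ * max (x 2) 0) :=
      cov L.symm (fun x : E3 => a₁ * max (x 0) 0 + b₁ * max (x 1) 0 + c₁ * max (x 2) 0)
    rw [integral_add hintL1 hinner, oddZero v, add_zero, hcov]
  set C := ∫ x in closedBall (0 : E3) 1, max (x 0) 0 with hC
  have hval : ∀ a b c : ℝ,
      ∫ x in cb, (a * max (x 0) 0 + b * max (x 1) 0 + c * max (x 2) 0) = (a + b + c) * C := by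
    intro a b c
    have i0 : IntegrableOn (fun x : E3 => a * max (x 0) 0) cb := (intMax 0).const_mul a
    have i1 : IntegrableOn (fun x : E3 => b * max (x 1) 0) cb := (intMax 1).const_mul b
    have i2 : IntegrableOn (fun x : E3 => c * max (x 2) 0) cb := (intMax 2).const_mul c
    have i01 : IntegrableOn (fun x : E3 => a * max (x 0) 0 + b * max (x 1) 0) cb := i0.add i1
    rw [integral_add i01 i2, integral_add i0 i1]
    simp only [integral_const_mul]
    rw [hcb, coordEq 1, coordEq 2]
    ring
  rw [hsplit, hval, hval] at hmono
  have hCpos : 0 < C := coordPos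
  exact le_of_mul_le_mul_right (by linarith) hCpos
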